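/- arXiv:2009.10935 — 3 statements merged into one kernel-verified Lean document; each statement's English description precedes it below -/
import Mathlib

section
/- Every solution of the ODE f'' - (f')² = 1 on an open interval is of the form f(t) = c - log|cos(t + ψ)| for constants c and ψ. -/
open Real

lemma constOnIoo {a b : ℝ} {F : ℝ → ℝ} (h : ∀ t ∈ Set.Ioo a b, HasDerivAt F 0 t)
    {x y : ℝ} (hx : x ∈ Set.Ioo a b) (hy : y ∈ Set.Ioo a b) : F x = F y := by
  apply (convex_Ioo a b).is_const_of_fderivWithin_eq_zero
    (fun t ht => ((h t ht).differentiableAt).differentiableWithinAt) _ hx hy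
  intro t ht
  have := ((h t ht).hasFDerivAt.hasFDerivWithinAt).fderivWithin
    (isOpen_Ioo.uniqueDiffWithinAt ht)
  rw [this]; ext; simp

/-- Every solution of `f'' - (f')² = 1` on an open interval has the form
`f t = c - log |cos (t + ψ)|`. -/
theorem stmt1 (a b : ℝ) (f f' f'' : ℝ → ℝ)
    (hf : ∀ t ∈ Set.Ioo a b, HasDerivAt f (f' t) t)
    (hf' : ∀ t ∈ Set.Ioo a b, HasDerivAt f' (f'' t) t)
    (hode : ∀ t ∈ Set.Ioo a b, f'' t - (f' t) ^ 2 = 1) :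
    ∃ c ψ : ℝ, ∀ t ∈ Set.Ioo a b, f t = c - Real.log |Real.cos (t + ψ)| := by
  rcases le_or_gt b a with hba | hab
  · exact ⟨0, 0, fun t ht => absurd (ht.1.trans ht.2) (not_lt.2 hba)⟩
  set t₀ := (a + b) / 2 with ht₀def
  have ht₀ : t₀ ∈ Set.Ioo a b := ⟨by simp [ht₀def]; linarith, by simp [ht₀def]; linarith⟩
  -- h t = arctan (f' t) - t has derivative 0
  have hH : ∀ t ∈ Set.Ioo a b, HasDerivAt (fun s => arctan (f' s) - s) 0 t := by
    intro t ht
    have h1 : HasDerivAt (fun s => arctan (f' s)) ((1 / (1 + (f' t) ^ 2)) * f'' t) t :=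
      (Real.hasDerivAt_arctan (f' t)).comp t (hf' t ht)
    have h2 : (1 / (1 + (f' t) ^ 2)) * f'' t = 1 := by
      have := hode t ht
      have hne : 1 + (f' t) ^ 2 ≠ 0 := by positivity
      field_simp
      linarith
    rw [h2] at h1
    have h3 := h1.sub (hasDerivAt_id t)
    rw [sub_self] at h3
    exact h3
  set ψ := arctan (f' t₀) - t₀ with hψdef
  have harctan : ∀ t ∈ Set.Ioo a b, arctan (f' t) = t + ψ := by
    intro t ht
    have := constOnIoo hH ht ht₀
    rw [hψdef]; linarith [this]
  have hcospos : ∀ t ∈ Set.Ioo a b, 0 < Real.cos (t + ψ) := by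
    intro t ht
    rw [← harctan t ht]
    exact Real.cos_arctan_pos _
  have htan : ∀ t ∈ Set.Ioo a b, f' t = Real.tan (t + ψ) := by
    intro t ht
    rw [← harctan t ht, Real.tan_arctan]
  -- F t = f t + log (cos (t + ψ)) has derivative 0
  have hF : ∀ t ∈ Set.Ioo a b, HasDerivAt (fun s => f s + Real.log (Real.cos (s + ψ))) 0 t := by
    intro t ht
    have hc : HasDerivAt (fun s => Real.cos (s + ψ)) (-Real.sin (t + ψ)) t := by
      have := (Real.hasDerivAt_cos (t + ψ)).comp t
        ((hasDerivAt_id t).add_const ψ)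
      rw [mul_one] at this
      exact this
    have hl := (Real.hasDerivAt_log (ne_of_gt (hcospos t ht))).comp t hc
    have := (hf t ht).add hl
    have heq : f' t + (Real.cos (t + ψ))⁻¹ * -Real.sin (t + ψ) = 0 := by
      rw [htan t ht, Real.tan_eq_sin_div_cos]
      field_simp
      simp
    rwa [heq] at this
  refine ⟨f t₀ + Real.log (Real.cos (t₀ + ψ)), ψ, fun t ht => ?_⟩
  have := constOnIoo hF ht ht₀
  rw [abs_of_pos (hcospos t ht)]
  linarith [this]
end

section
/- Let m ≥ 2 be an integer and consider the ODE λ'' - (4i - 2m tan φ) λ' + 4m(1 - i tan φ) λ = 0 on (-π/2, π/2) for a complex-valued function λ. If λ(φ) = A e^{((2m-4)/(2m-1)) i φ} + B (with constants A, B ∈ ℂ when m ≠ 2), then λ is identically zero, i.e. A = B = 0. -/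
open Real Complex

/-- If `λ` on `(-π/2, π/2)` satisfies both `λ'' = ((2m-4)/(2m-1)) i λ'` and
`λ'' - (4i - 2m tan φ) λ' + 4m (1 - i tan φ) λ = 0`, and has the form
`λ φ = A exp(((2m-4)/(2m-1)) i φ) + B` (m ≠ 2), then `A = B = 0`. -/
theorem stmt4 (m : ℕ) (hm : 1 < m) (hm2 : m ≠ 2) (A B : ℂ) (l l' l'' : ℝ → ℂ)
    (hl : ∀ φ ∈ Set.Ioo (-(π / 2)) (π / 2), HasDerivAt l (l' φ) φ)
    (hl' : ∀ φ ∈ Set.Ioo (-(π / 2)) (π / 2), HasDerivAt l' (l'' φ) φ)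
    (hode1 : ∀ φ ∈ Set.Ioo (-(π / 2)) (π / 2),
      l'' φ = ((2 * (m : ℂ) - 4) / (2 * (m : ℂ) - 1)) * Complex.I * l' φ)
    (hode2 : ∀ φ ∈ Set.Ioo (-(π / 2)) (π / 2),
      l'' φ - (4 * Complex.I - 2 * (m : ℂ) * (Real.tan φ : ℂ)) * l' φ
        + 4 * (m : ℂ) * (1 - Complex.I * (Real.tan φ : ℂ)) * l φ = 0)
    (hform : ∀ φ ∈ Set.Ioo (-(π / 2)) (π / 2),
      l φ = A * Complex.exp (((2 * (m : ℂ) - 4) / (2 * (m : ℂ) - 1)) * Complex.I * φ) + B) :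
    A = 0 ∧ B = 0 := by
  set n : ℂ := (m : ℂ) with hn
  set c : ℂ := (2 * n - 4) / (2 * n - 1) with hc
  -- basic nonvanishing facts
  have hn0 : n ≠ 0 := by
    simp only [hn, Ne, Nat.cast_eq_zero]; omega
  have hn1 : n - 1 ≠ 0 := by
    rw [sub_ne_zero, hn, Ne, Nat.cast_eq_one]; omega
  have hn2 : n - 2 ≠ 0 := by
    rw [sub_ne_zero, hn]
    intro h
    exact hm2 (by exact_mod_cast h)
  have hnp1 : n + 1 ≠ 0 := by
    have : ((m + 1 : ℕ) : ℂ) ≠ 0 := Nat.cast_ne_zero.mpr (by omega)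
    intro h; apply this; push_cast; linear_combination h
  have hden : 2 * n - 1 ≠ 0 := by
    have h21 : ((2 * m : ℕ) : ℂ) ≠ ((1 : ℕ) : ℂ) := by
      rw [Ne, Nat.cast_inj]; omega
    intro h
    apply h21
    push_cast
    linear_combination h
  -- the derivative of l on the interval
  have hl'eq : ∀ φ ∈ Set.Ioo (-(π / 2)) (π / 2),
      l' φ = A * (c * Complex.I) * Complex.exp (c * Complex.I * φ) := by
    intro φ hφ
    have h1 : HasDerivAt (fun z : ℂ => Complex.exp (c * Complex.I * z))
        (Complex.exp (c * Complex.I * φ) * (c * Complex.I)) (φ : ℂ) := by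
      have h := (Complex.hasDerivAt_exp (c * Complex.I * φ)).comp (φ : ℂ)
        ((hasDerivAt_id (φ : ℂ)).const_mul (c * Complex.I))
      rw [mul_one] at h
      exact h
    have h2 : HasDerivAt (fun x : ℝ => A * Complex.exp (c * Complex.I * x) + B)
        (A * (c * Complex.I) * Complex.exp (c * Complex.I * φ)) φ := by
      have := ((h1.comp_ofReal).const_mul A).add_const B
      convert this using 1
      rfl
      ring
    have heq : l =ᶠ[nhds φ] fun x : ℝ => A * Complex.exp (c * Complex.I * x) + B := by
      filter_upwards [isOpen_Ioo.mem_nhds hφ] with x hx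
      exact hform x hx
    exact (hl φ hφ).unique (h2.congr_of_eventuallyEq heq)
  -- key pointwise equation
  have key : ∀ φ ∈ Set.Ioo (-(π / 2)) (π / 2),
      A * Complex.exp (c * Complex.I * φ) *
        ((c * Complex.I) ^ 2 - (4 * Complex.I - 2 * n * (Real.tan φ : ℂ)) * (c * Complex.I)
          + 4 * n * (1 - Complex.I * (Real.tan φ : ℂ)))
        + 4 * n * (1 - Complex.I * (Real.tan φ : ℂ)) * B = 0 := by
    intro φ hφ
    have h2 := hode2 φ hφ
    rw [hode1 φ hφ, hl'eq φ hφ, hform φ hφ] at h2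
    linear_combination h2
  -- abbreviations
  set α : ℂ := 4 * n + 4 * c - c ^ 2 with hα
  set μ : ℂ := 2 * n * (c - 2) with hμ
  have hK : ∀ t : ℂ, (c * Complex.I) ^ 2 - (4 * Complex.I - 2 * n * t) * (c * Complex.I)
      + 4 * n * (1 - Complex.I * t) = α + Complex.I * μ * t := by
    intro t
    rw [hα, hμ]
    linear_combination (c ^ 2 - 4 * c) * Complex.I_sq
  -- memberships
  have hπ := Real.pi_pos
  have h0m : (0 : ℝ) ∈ Set.Ioo (-(π / 2)) (π / 2) := by
    constructor <;> linarith
  have h1m : (π / 4) ∈ Set.Ioo (-(π / 2)) (π / 2) := by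
    constructor <;> linarith
  have h2m : (-(π / 4)) ∈ Set.Ioo (-(π / 2)) (π / 2) := by
    constructor <;> linarith
  -- the three equations
  have E0 : A * α + 4 * n * B = 0 := by
    have h := key 0 h0m
    simp only [Real.tan_zero, Complex.ofReal_zero, mul_zero, Complex.exp_zero] at h
    linear_combination h - A * (hK 0)
  set e : ℂ := Complex.exp (c * Complex.I * ((π / 4 : ℝ) : ℂ)) with he_def
  set e' : ℂ := Complex.exp (c * Complex.I * ((-(π / 4) : ℝ) : ℂ)) with he'_def
  have hee' : e * e' = 1 := by
    rw [he_def, he'_def, ← Complex.exp_add, ← Complex.exp_zero]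
    congr 1
    push_cast
    ring
  have E1 : A * e * (α + Complex.I * μ) + 4 * n * (1 - Complex.I) * B = 0 := by
    have h := key (π / 4) h1m
    rw [Real.tan_pi_div_four] at h
    simp only [Complex.ofReal_one] at h
    rw [← he_def] at h
    linear_combination h - A * e * (hK 1)
  have E2 : A * e' * (α - Complex.I * μ) + 4 * n * (1 + Complex.I) * B = 0 := by
    have h := key (-(π / 4)) h2m
    rw [Real.tan_neg, Real.tan_pi_div_four, ← he'_def] at h
    simp only [Complex.ofReal_neg, Complex.ofReal_one] at h
    linear_combination h - A * e' * (hK (-1))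
  -- polynomial identities for μ ± α
  have hid1 : (2 * n - 1) ^ 2 * (μ - α) = -24 * (n * (n - 1) * (n + 1)) := by
    simp only [hμ, hα, hc]
    field_simp
    ring
  have hid2 : (2 * n - 1) ^ 2 * (μ + α) = 8 * (n * (n - 2) * (n + 1)) := by
    simp only [hμ, hα, hc]
    field_simp
    ring
  -- main algebra: A = 0
  have hA : A = 0 := by
    by_contra hA0
    have hP : e * (α + Complex.I * μ) = (1 - Complex.I) * α := by
      have h : A * (e * (α + Complex.I * μ) - (1 - Complex.I) * α) = 0 := by
        linear_combination E1 - (1 - Complex.I) * E0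
      have h2 := (mul_eq_zero.mp h).resolve_left hA0
      linear_combination h2
    have hQ : e' * (α - Complex.I * μ) = (1 + Complex.I) * α := by
      have h : A * (e' * (α - Complex.I * μ) - (1 + Complex.I) * α) = 0 := by
        linear_combination E2 - (1 + Complex.I) * E0
      have h2 := (mul_eq_zero.mp h).resolve_left hA0
      linear_combination h2
    have hmul : (e * (α + Complex.I * μ)) * (e' * (α - Complex.I * μ))
        = ((1 - Complex.I) * α) * ((1 + Complex.I) * α) := by
      rw [hP, hQ]
    have hμ2 : μ ^ 2 = α ^ 2 := by
      linear_combination hmul + (e * e' * μ ^ 2 - α ^ 2) * Complex.I_sq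
        - (α ^ 2 + μ ^ 2) * hee'
    have hfa : (μ - α) * (μ + α) = 0 := by linear_combination hμ2
    rcases mul_eq_zero.mp hfa with h | h
    · rw [h, mul_zero] at hid1
      have : n * (n - 1) * (n + 1) = 0 := by linear_combination (1/24 : ℂ) * hid1
      rcases mul_eq_zero.mp this with h' | h'
      · rcases mul_eq_zero.mp h' with h'' | h''
        · exact hn0 h''
        · exact hn1 h''
      · exact hnp1 h'
    · rw [h, mul_zero] at hid2
      have : n * (n - 2) * (n + 1) = 0 := by linear_combination (-1/8 : ℂ) * hid2
      rcases mul_eq_zero.mp this with h' | h'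
      · rcases mul_eq_zero.mp h' with h'' | h''
        · exact hn0 h''
        · exact hn2 h''
      · exact hnp1 h'
  refine ⟨hA, ?_⟩
  have h4 : (4 : ℂ) * n ≠ 0 := by
    simp [hn0]
  rw [hA, zero_mul, zero_add] at E0
  exact (mul_eq_zero.mp E0).resolve_left h4
end

section
/- Let m ≥ 2 be an integer, let Λ, ulΛ, c be real constants, set b = -2(Λ/(2m+1) - ulΛ/(2m+2)) a_m where a₀ = 1, a_j = ((2m-2j+4)/(2m-2j+1)) a_{j-1}, and define λ₀(φ) = ulΛ/(2m+2) + (Λ/(2m+1) - ulΛ/(2m+2)) Σ_{j=0}^m a_j cos^{2j} φ + b cos^{2m+2} φ + c cos^{2m+1} φ sin φ. Then λ₀ satisfies the first-order ODE tan φ · λ₀'(φ) - (2m+2 - (2m+1) sec² φ) λ₀(φ) = Λ sec² φ - ulΛ on (-π/2, π/2) \ {0}. -/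
open Real

/-- The sequence `a₀ = 1`, `a_j = ((2m - 2j + 4)/(2m - 2j + 1)) a_{j-1}`. -/
noncomputable def aSeq (m : ℕ) : ℕ → ℝ
  | 0 => 1
  | j + 1 => ((2 * (m : ℝ) - 2 * ((j : ℝ) + 1) + 4) / (2 * (m : ℝ) - 2 * ((j : ℝ) + 1) + 1))
      * aSeq m j

lemma aseq_rec (m n : ℕ) :
    aSeq m (n+1) * (2*(m:ℝ)+1-2*((n:ℝ)+1)) = aSeq m n * (2*(m:ℝ)+2-2*(n:ℝ)) := by
  have hne : (2*(m:ℝ) - 2*((n:ℝ)+1) + 1) ≠ 0 := by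
    intro h
    have h2 : (2*(m:ℤ) - 2*((n:ℤ)+1) + 1 : ℤ) = 0 := by
      exact_mod_cast (by push_cast; linarith : ((2*(m:ℤ) - 2*((n:ℤ)+1) + 1 : ℤ) : ℝ) = 0)
    omega
  show ((2 * (m : ℝ) - 2 * ((n : ℝ) + 1) + 4) / (2 * (m : ℝ) - 2 * ((n : ℝ) + 1) + 1))
      * aSeq m n * _ = _
  linear_combination aSeq m n * div_mul_cancel₀ (2 * (m : ℝ) - 2 * ((n : ℝ) + 1) + 4) hne

lemma tele (m : ℕ) (x : ℝ) : ∀ n : ℕ,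
    ∑ j ∈ Finset.range (n+1), aSeq m j *
      ((2*(m:ℝ)+1-2*(j:ℝ)) * x^(2*j) - (2*(m:ℝ)+2-2*(j:ℝ)) * x^(2*j+2))
    = (2*(m:ℝ)+1) - aSeq m n * (2*(m:ℝ)+2-2*(n:ℝ)) * x^(2*n+2) := by
  intro n
  induction n with
  | zero => simp [aSeq]
  | succ k ih =>
      rw [Finset.sum_range_succ, ih]
      push_cast
      linear_combination x^(2*k+2) * aseq_rec m k

/-- The function `λ₀` with `b = -2 (Λ/(2m+1) - ulΛ/(2m+2)) a_m`. -/
noncomputable def lam0 (m : ℕ) (Λ ulΛ c : ℝ) (φ : ℝ) : ℝ :=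
  ulΛ / (2 * (m : ℝ) + 2)
    + (Λ / (2 * (m : ℝ) + 1) - ulΛ / (2 * (m : ℝ) + 2)) *
        (∑ j ∈ Finset.range (m + 1), aSeq m j * Real.cos φ ^ (2 * j))
    + (-2 * (Λ / (2 * (m : ℝ) + 1) - ulΛ / (2 * (m : ℝ) + 2)) * aSeq m m)
        * Real.cos φ ^ (2 * m + 2)
    + c * Real.cos φ ^ (2 * m + 1) * Real.sin φ

lemma lam0_deriv (m : ℕ) (Λ ulΛ c φ : ℝ) :
    HasDerivAt (lam0 m Λ ulΛ c)
      (0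
        + (Λ / (2 * (m : ℝ) + 1) - ulΛ / (2 * (m : ℝ) + 2)) *
            (∑ j ∈ Finset.range (m + 1),
              aSeq m j * ((2*j : ℕ) * Real.cos φ ^ (2*j-1) * (-Real.sin φ)))
        + (-2 * (Λ / (2 * (m : ℝ) + 1) - ulΛ / (2 * (m : ℝ) + 2)) * aSeq m m)
            * ((2*m+2 : ℕ) * Real.cos φ ^ (2*m+2-1) * (-Real.sin φ))
        + ((c * ((2*m+1 : ℕ) * Real.cos φ ^ (2*m+1-1) * (-Real.sin φ))) * Real.sin φ
            + (c * Real.cos φ ^ (2*m+1)) * Real.cos φ)) φ := by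
  unfold lam0
  exact (((hasDerivAt_const φ _).add
      ((HasDerivAt.fun_sum (fun j _ => ((Real.hasDerivAt_cos φ).pow (2*j)).const_mul (aSeq m j))).const_mul _)).add
      (((Real.hasDerivAt_cos φ).pow (2*m+2)).const_mul _)).add
      ((((Real.hasDerivAt_cos φ).pow (2*m+1)).const_mul c).mul (Real.hasDerivAt_sin φ))

/-- `λ₀` satisfies the first-order ODE
`tan φ λ₀' - (2m+2 - (2m+1) sec² φ) λ₀ = Λ sec² φ - ulΛ` on `(-π/2, π/2) \ {0}`. -/
theorem stmt7 (m : ℕ) (hm : 2 ≤ m) (Λ ulΛ c : ℝ) :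
    ∀ φ ∈ Set.Ioo (-(π / 2)) (π / 2), φ ≠ 0 →
      Real.tan φ * deriv (lam0 m Λ ulΛ c) φ
        - (2 * (m : ℝ) + 2 - (2 * (m : ℝ) + 1) * (1 / Real.cos φ) ^ 2) * lam0 m Λ ulΛ c φ
        = Λ * (1 / Real.cos φ) ^ 2 - ulΛ := by
  intro φ hφ _
  have hco : Real.cos φ ≠ 0 := ne_of_gt (Real.cos_pos_of_mem_Ioo hφ)
  have hd := (lam0_deriv m Λ ulΛ c φ).deriv
  rw [show 2*m+2-1 = 2*m+1 from by omega, show 2*m+1-1 = 2*m from by omega] at hd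
  push_cast at hd
  rw [hd, Real.tan_eq_sin_div_cos]
  simp only [lam0]
  set s := Real.sin φ with hs
  set co := Real.cos φ with hcodef
  set K := Λ / (2 * (m:ℝ) + 1) - ulΛ / (2 * (m:ℝ) + 2) with hK
  have hs2 : s^2 = 1 - co^2 := by rw [hs, hcodef]; exact Real.sin_sq φ
  have hterm : ∀ j ∈ Finset.range (m+1),
      s * co * (aSeq m j * (2 * (j:ℝ) * co ^ (2*j-1) * -s))
        - ((2*(m:ℝ)+2)*co^2 - (2*(m:ℝ)+1)) * (aSeq m j * co^(2*j))
      = aSeq m j * ((2*(m:ℝ)+1-2*(j:ℝ))*co^(2*j) - (2*(m:ℝ)+2-2*(j:ℝ))*co^(2*j+2)) := by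
    intro j _
    match j with
    | 0 => push_cast; ring_nf
    | k+1 =>
        rw [show 2*(k+1)-1 = 2*k+1 from by omega]
        push_cast
        linear_combination (-(aSeq m (k+1)) * (2*(k:ℝ)+2) * co^(2*k+2)) * hs2
  have hS : s * co * (∑ j ∈ Finset.range (m+1), aSeq m j * (2 * (j:ℝ) * co ^ (2*j-1) * -s))
      - ((2*(m:ℝ)+2)*co^2 - (2*(m:ℝ)+1)) * (∑ j ∈ Finset.range (m+1), aSeq m j * co^(2*j))
      = (2*(m:ℝ)+1) - 2 * aSeq m m * co^(2*m+2) := by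
    rw [Finset.mul_sum, Finset.mul_sum, ← Finset.sum_sub_distrib,
      Finset.sum_congr rfl hterm, tele m co m]
    ring
  have hA : (2*(m:ℝ)+1) * (Λ / (2*(m:ℝ)+1)) = Λ := by
    rw [mul_div_cancel₀]; positivity
  have hB : (2*(m:ℝ)+2) * (ulΛ / (2*(m:ℝ)+2)) = ulΛ := by
    rw [mul_div_cancel₀]; positivity
  have key : ∀ Dv Lv : ℝ,
      s * co * Dv - ((2*(m:ℝ)+2)*co^2 - (2*(m:ℝ)+1)) * Lv = Λ - ulΛ * co^2 →
      s / co * Dv - (2*(m:ℝ)+2 - (2*(m:ℝ)+1) * (1/co)^2) * Lv = Λ * (1/co)^2 - ulΛ := by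
    intro Dv Lv h
    field_simp
    linear_combination h
  apply key
  linear_combination K * hS +
    ((2*(m:ℝ)+2) * (2 * K * aSeq m m) * co^(2*m+2)
      - (2*(m:ℝ)+1) * c * s * co^(2*m+1)) * hs2 - co^2 * hB + hA
end
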